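/- Let γ₁, γ₂ > 0 with γ₁ ≠ γ₂, let κ > 0 and t ≥ 1, and let μ ∈ (0, 1) satisfy min{μ, 1 − μ} ≥ κ/t. Then D(f(μ, γ₁) ‖ f(μ, γ₂)) ≥ c₀ · κ/t, where c₀ = (1/2) · (√γ₁ − √γ₂)² / max{(γ₁ + γ₂)/2, 1}². -/

import Mathlib

set_option maxHeartbeats 1000000


/-- The declaration probability function `f(μ, γ) = γμ/(1 + (γ − 1)μ)`. -/
noncomputable def declProb (μ γ : ℝ) : ℝ := γ * μ / (1 + (γ - 1) * μ)

/-- Kullback–Leibler divergence between `Bernoulli(p)` and `Bernoulli(q)`. -/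
noncomputable def klBernoulli (p q : ℝ) : ℝ :=
  p * Real.log (p / q) + (1 - p) * Real.log ((1 - p) / (1 - q))

/-- Let `γ₁, γ₂ > 0` with `γ₁ ≠ γ₂`, let `κ > 0` and `t ≥ 1`, and let
`μ ∈ (0, 1)` satisfy `min{μ, 1 − μ} ≥ κ/t`. Then
`D(f(μ, γ₁) ‖ f(μ, γ₂)) ≥ c₀ · κ/t`, with
`c₀ = (1/2)·(√γ₁ − √γ₂)²/max{(γ₁ + γ₂)/2, 1}²`. -/
theorem klBernoulli_declProb_kappa_over_t_bound
    (γ₁ γ₂ κ : ℝ) (t : ℕ) (hγ₁ : 0 < γ₁) (hγ₂ : 0 < γ₂) (hne : γ₁ ≠ γ₂)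
    (hκ : 0 < κ) (ht : 1 ≤ t) (μ : ℝ) (hμ : μ ∈ Set.Ioo (0 : ℝ) 1)
    (hμt : κ / (t : ℝ) ≤ min μ (1 - μ)) :
    (1 / 2) * (Real.sqrt γ₁ - Real.sqrt γ₂) ^ 2 / max ((γ₁ + γ₂) / 2) 1 ^ 2 * (κ / (t : ℝ))
      ≤ klBernoulli (declProb μ γ₁) (declProb μ γ₂) := by
  obtain ⟨hμ0, hμ1⟩ := hμ
  have hμ1' : 0 < 1 - μ := by linarith
  set g := Real.sqrt γ₁ with hgdef
  set h := Real.sqrt γ₂ with hhdef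
  have hg0 : 0 < g := Real.sqrt_pos.mpr hγ₁
  have hh0 : 0 < h := Real.sqrt_pos.mpr hγ₂
  have eg : g ^ 2 = γ₁ := Real.sq_sqrt hγ₁.le
  have eh : h ^ 2 = γ₂ := Real.sq_sqrt hγ₂.le
  set D₁ := 1 + (γ₁ - 1) * μ with hD₁def
  set D₂ := 1 + (γ₂ - 1) * μ with hD₂def
  have hD₁ : 0 < D₁ := by rw [hD₁def]; linarith [mul_pos hγ₁ hμ0]
  have hD₂ : 0 < D₂ := by rw [hD₂def]; linarith [mul_pos hγ₂ hμ0]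
  have hDD : 0 < D₁ * D₂ := mul_pos hD₁ hD₂
  set P := γ₁ * μ / D₁ with hPdef
  set Q := γ₂ * μ / D₂ with hQdef
  have hPeq : declProb μ γ₁ = P := by rw [declProb, hPdef, hD₁def]
  have hQeq : declProb μ γ₂ = Q := by rw [declProb, hQdef, hD₂def]
  have hP0 : 0 < P := div_pos (mul_pos hγ₁ hμ0) hD₁
  have hQ0 : 0 < Q := div_pos (mul_pos hγ₂ hμ0) hD₂
  have h1P : 1 - P = (1 - μ) / D₁ := by rw [hPdef, eq_div_iff hD₁.ne', sub_mul, div_mul_cancel₀ _ hD₁.ne', hD₁def]; ring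
  have h1Q : 1 - Q = (1 - μ) / D₂ := by rw [hQdef, eq_div_iff hD₂.ne', sub_mul, div_mul_cancel₀ _ hD₂.ne', hD₂def]; ring
  have h1P0 : 0 < 1 - P := by rw [h1P]; exact div_pos hμ1' hD₁
  have h1Q0 : 0 < 1 - Q := by rw [h1Q]; exact div_pos hμ1' hD₂
  -- square roots
  have hghμ : 0 ≤ g * h * μ := by positivity
  have hsPQ : Real.sqrt (P * Q) = g * h * μ / Real.sqrt (D₁ * D₂) := by
    have hPQ : P * Q = (g * h * μ) ^ 2 / (D₁ * D₂) := by
      have : (g * h * μ) ^ 2 = γ₁ * γ₂ * μ ^ 2 := by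
        rw [mul_pow, mul_pow, eg, eh]
      rw [this, hPdef, hQdef]
      field_simp
    rw [hPQ, Real.sqrt_div (by positivity), Real.sqrt_sq hghμ]
  have hs1PQ : Real.sqrt ((1 - P) * (1 - Q)) = (1 - μ) / Real.sqrt (D₁ * D₂) := by
    have : (1 - P) * (1 - Q) = (1 - μ) ^ 2 / (D₁ * D₂) := by
      rw [h1P, h1Q]; field_simp
    rw [this, Real.sqrt_div (by positivity), Real.sqrt_sq hμ1'.le]
  set SD := Real.sqrt (D₁ * D₂) with hSDdef
  have hSD0 : 0 < SD := Real.sqrt_pos.mpr hDD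
  have hSDsq : SD ^ 2 = D₁ * D₂ := Real.sq_sqrt hDD.le
  set A := g * h * μ + (1 - μ) with hAdef
  have hA0 : 0 < A := by positivity
  -- Jensen step: KL ≥ -2 log B where B = √(PQ) + √((1-P)(1-Q)) = A / SD
  set x := Real.sqrt (P * Q) / P with hxdef
  set y := Real.sqrt ((1 - P) * (1 - Q)) / (1 - P) with hydef
  have hx0 : 0 < x := div_pos (Real.sqrt_pos.mpr (mul_pos hP0 hQ0)) hP0
  have hy0 : 0 < y := div_pos (Real.sqrt_pos.mpr (mul_pos h1P0 h1Q0)) h1P0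
  have hjensen := (strictConcaveOn_log_Ioi.concaveOn).2 (Set.mem_Ioi.mpr hx0)
    (Set.mem_Ioi.mpr hy0) hP0.le h1P0.le (by ring)
  simp only [smul_eq_mul] at hjensen
  have hPx : P * x = Real.sqrt (P * Q) := by
    rw [hxdef]; field_simp
  have h1Py : (1 - P) * y = Real.sqrt ((1 - P) * (1 - Q)) := by
    rw [hydef]; field_simp
  have hB : P * x + (1 - P) * y = A / SD := by
    rw [hPx, h1Py, hsPQ, hs1PQ, hAdef, hSDdef]; ring
  -- log x and log y
  have hlogx : Real.log x = (Real.log Q - Real.log P) / 2 := by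
    rw [hxdef, Real.log_div (by positivity) hP0.ne',
      Real.log_sqrt (mul_pos hP0 hQ0).le, Real.log_mul hP0.ne' hQ0.ne']
    ring
  have hlogy : Real.log y = (Real.log (1 - Q) - Real.log (1 - P)) / 2 := by
    rw [hydef, Real.log_div (by positivity) h1P0.ne',
      Real.log_sqrt (mul_pos h1P0 h1Q0).le, Real.log_mul h1P0.ne' h1Q0.ne']
    ring
  have hlogB : Real.log (A / SD) = Real.log A - Real.log (D₁ * D₂) / 2 := by
    rw [Real.log_div hA0.ne' hSD0.ne', hSDdef, Real.log_sqrt hDD.le]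
  -- KL expansion
  have hKL : klBernoulli P Q
      = P * (Real.log P - Real.log Q) + (1 - P) * (Real.log (1 - P) - Real.log (1 - Q)) := by
    rw [klBernoulli, Real.log_div hP0.ne' hQ0.ne', Real.log_div h1P0.ne' h1Q0.ne']
  have hstep1 : Real.log (D₁ * D₂) - 2 * Real.log A ≤ klBernoulli P Q := by
    rw [hB, hlogB, hlogx, hlogy] at hjensen
    rw [hKL]; linarith [hjensen]
  -- log bound
  have hstep2 : 1 - A ^ 2 / (D₁ * D₂) ≤ Real.log (D₁ * D₂) - 2 * Real.log A := by
    have h1 : Real.log (A ^ 2 / (D₁ * D₂)) ≤ A ^ 2 / (D₁ * D₂) - 1 :=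
      Real.log_le_sub_one_of_pos (by positivity)
    rw [Real.log_div (by positivity) hDD.ne', Real.log_pow] at h1
    push_cast at h1
    linarith
  -- key algebraic identity
  have hkey : D₁ * D₂ - A ^ 2 = μ * (1 - μ) * (g - h) ^ 2 := by
    rw [hD₁def, hD₂def, hAdef]
    linear_combination (μ * (1 + (γ₂ - 1) * μ)) * eg.symm + (μ * (1 + (g ^ 2 - 1) * μ)) * eh.symm
  have hstep3 : 1 - A ^ 2 / (D₁ * D₂) = μ * (1 - μ) * (g - h) ^ 2 / (D₁ * D₂) := by
    field_simp
    linarith [hkey]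
  -- numeric final step
  clear_value g h D₁ D₂ P Q SD A x y
  set M := max ((γ₁ + γ₂) / 2) 1 with hMdef
  have hM1 : (1 : ℝ) ≤ M := le_max_right _ _
  have hM0 : 0 < M := lt_of_lt_of_le one_pos hM1
  have hDM : D₁ * D₂ ≤ M ^ 2 := by
    have h1 : (γ₁ + γ₂) / 2 ≤ M := le_max_left _ _
    have h2 : D₁ + D₂ ≤ 2 * M := by
      rw [hD₁def, hD₂def]
      have e1 := mul_le_mul_of_nonneg_left h1 hμ0.le
      have e2 := mul_le_mul_of_nonneg_left hM1 hμ1'.le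
      linarith
    have hsq := mul_self_le_mul_self (by positivity : (0:ℝ) ≤ D₁ + D₂) h2
    linarith [sq_nonneg (D₁ - D₂), hsq]
  have ht0 : (0 : ℝ) < t := by exact_mod_cast Nat.lt_of_lt_of_le Nat.zero_lt_one ht
  set k := κ / (t : ℝ) with hkdef
  have hk0 : 0 < k := div_pos hκ ht0
  have hkμ : k ≤ μ := le_trans hμt (min_le_left _ _)
  have hkμ' : k ≤ 1 - μ := le_trans hμt (min_le_right _ _)
  have hk2 : k ≤ 2 * μ * (1 - μ) := by
    rcases le_total μ (1 / 2) with hc | hc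
    · have := mul_nonneg hμ0.le (by linarith : (0:ℝ) ≤ 1 - 2 * μ)
      linarith
    · have := mul_nonneg hμ1'.le (by linarith : (0:ℝ) ≤ 2 * μ - 1)
      linarith
  have hfinal : (1 / 2) * (g - h) ^ 2 / M ^ 2 * k ≤ μ * (1 - μ) * (g - h) ^ 2 / (D₁ * D₂) := by
    rw [div_mul_eq_mul_div, div_le_div_iff₀ (by positivity) hDD]
    have hs : 0 ≤ (g - h) ^ 2 := sq_nonneg _
    have hA1 : k * (D₁ * D₂) ≤ 2 * μ * (1 - μ) * M ^ 2 := by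
      have := mul_le_mul hk2 hDM hDD.le (by positivity)
      linarith
    linarith [mul_le_mul_of_nonneg_left hA1 hs]
  rw [hPeq, hQeq]
  calc (1 / 2) * (g - h) ^ 2 / M ^ 2 * k
      ≤ μ * (1 - μ) * (g - h) ^ 2 / (D₁ * D₂) := hfinal
    _ = 1 - A ^ 2 / (D₁ * D₂) := hstep3.symm
    _ ≤ Real.log (D₁ * D₂) - 2 * Real.log A := hstep2
    _ ≤ klBernoulli P Q := hstep1
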